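/- Let A = {f ∈ C(𝕋, M_n(ℂ)) : f(x_i) ∈ M_{d_i}, i = 1,…,N} be a building block with exceptional points x₁,…,x_N. Let g : 𝕋 → 𝕋 be continuous and let h₁,…,h_N ∈ 𝕋 satisfy h_i^{n/d_i} = g(x_i) for each i. Then there exists a unitary u ∈ A such that det(u(z)) = g(z) for all z ∈ 𝕋 and det(Λ_i(u)) = h_i for i = 1,…,N. -/

import Mathlib

open Complex Finset

/-- Lagrange-style interpolation basis function via distances. -/
noncomputable def lagr {N : ℕ} (x : Fin N → Circle) (i : Fin N) (z : Circle) : ℝ :=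
  ∏ k ∈ Finset.univ.erase i, dist z (x k) / dist (x i) (x k)

lemma lagr_cont {N : ℕ} (x : Fin N → Circle) (i : Fin N) : Continuous (lagr x i) := by
  unfold lagr
  exact continuous_finset_prod _ fun k _ =>
    (continuous_id.dist continuous_const).div_const _

lemma lagr_self {N : ℕ} (x : Fin N → Circle) (hx : Function.Injective x) (i : Fin N) :
    lagr x i (x i) = 1 := by
  unfold lagr
  apply Finset.prod_eq_one
  intro k hk
  have hne : x i ≠ x k := fun e => (Finset.mem_erase.mp hk).1 (hx e.symm)
  exact div_self (dist_ne_zero.mpr hne)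

lemma lagr_ne {N : ℕ} (x : Fin N → Circle) (i j : Fin N) (hij : j ≠ i) :
    lagr x i (x j) = 0 := by
  unfold lagr
  apply Finset.prod_eq_zero (Finset.mem_erase.mpr ⟨hij, Finset.mem_univ j⟩)
  simp [dist_self]

lemma card_mod (m dd : ℕ) (hdd : 0 < dd) (hdvd : dd ∣ m) :
    (Finset.univ.filter (fun j : Fin m => (j : ℕ) % dd = 0)).card = m / dd := by
  have hemb : ∀ k : Fin (m / dd), dd * (k : ℕ) < m := by
    intro k
    calc dd * (k : ℕ) < dd * (m / dd) := (Nat.mul_lt_mul_left hdd).mpr k.isLt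
      _ = m := Nat.mul_div_cancel' hdvd
  rw [← Finset.card_fin (m / dd)]
  refine (Finset.card_bij (fun (k : Fin (m / dd)) _ => (⟨dd * k, hemb k⟩ : Fin m)) ?_ ?_ ?_).symm
  · intro k _; simp [Nat.mul_mod_right]
  · intro a _ b _ hab
    exact Fin.ext (Nat.eq_of_mul_eq_mul_left hdd (Fin.mk.inj_iff.mp hab))
  · intro j hj
    simp only [Finset.mem_filter] at hj
    have hdvdj : dd ∣ (j : ℕ) := Nat.dvd_of_mod_eq_zero hj.2
    refine ⟨⟨(j : ℕ) / dd, Nat.div_lt_div_of_lt_of_dvd hdvd j.isLt⟩, Finset.mem_univ _, ?_⟩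
    exact Fin.ext (by simp [Nat.mul_div_cancel' hdvdj])

/-- `M` lies in the unital copy of `M_d` inside `M_n`, embedded via
`a ↦ diag(a, a, …, a)` (`n/d` copies). -/
def IsBlockDiagRep (n d : ℕ) (M : Matrix (Fin n) (Fin n) ℂ) : Prop :=
  (∀ p q : Fin n, (p : ℕ) / d ≠ (q : ℕ) / d → M p q = 0) ∧
  (∀ p q p' q' : Fin n, (p : ℕ) / d = (q : ℕ) / d → (p' : ℕ) / d = (q' : ℕ) / d →
    (p : ℕ) % d = (p' : ℕ) % d → (q : ℕ) % d = (q' : ℕ) % d → M p q = M p' q')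

/-- given a continuous `g : 𝕋 → 𝕋` and `hᵢ ∈ 𝕋` with
`hᵢ^{n/dᵢ} = g(xᵢ)`, there is a unitary `u` in the building block
`A = {f ∈ C(𝕋, M_n) : f(xᵢ) ∈ M_{dᵢ}}` with `det(u(z)) = g(z)` for all `z`
and `det(Λᵢ(u)) = hᵢ` for all `i`. -/
theorem stmt_14 (n N : ℕ) (hn : 0 < n) (hN : 0 < N)
    (d : Fin N → ℕ) (hd : ∀ i, 0 < d i) (hdvd : ∀ i, d i ∣ n)
    (x : Fin N → Circle) (hx : Function.Injective x)
    (g : C(Circle, ℂ)) (hg : ∀ z, ‖g z‖ = 1)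
    (h : Fin N → ℂ) (hh : ∀ i, ‖h i‖ = 1)
    (hcompat : ∀ i, h i ^ (n / d i) = g (x i)) :
    ∃ u : C(Circle, Matrix (Fin n) (Fin n) ℂ),
      (∀ i, IsBlockDiagRep n (d i) (u (x i))) ∧
      (∀ z, u z * star (u z) = 1 ∧ star (u z) * u z = 1) ∧
      (∀ z, (u z).det = g z) ∧
      (∀ i, ((u (x i)).submatrix
          (Fin.castLE (Nat.le_of_dvd hn (hdvd i)))
          (Fin.castLE (Nat.le_of_dvd hn (hdvd i)))).det = h i) := by
  classical
  set z0 : Fin n := ⟨0, hn⟩ with hz0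
  set v : Fin N → Fin n → ℂ := fun i j => if (j : ℕ) % d i = 0 then h i else 1 with hv
  have hvabs : ∀ i j, ‖v i j‖ = 1 := by
    intro i j; by_cases hc : (j : ℕ) % d i = 0 <;> simp [hv, hc, hh i]
  have hvne : ∀ i j, v i j ≠ 0 := by
    intro i j e
    have := hvabs i j
    rw [e] at this; simp at this
  set θ : Fin N → Fin n → ℝ := fun i j => (v i j).arg with hθ
  have hexpθ : ∀ i j, Complex.exp ((θ i j : ℂ) * Complex.I) = v i j := by
    intro i j
    have := Complex.norm_mul_exp_arg_mul_I (v i j)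
    rwa [hvabs i j, Complex.ofReal_one, one_mul] at this
  set F : Fin n → Circle → ℝ := fun j z => ∑ i, θ i j * lagr x i z with hF
  have hFcont : ∀ j, Continuous (F j) :=
    fun j => continuous_finset_sum _ fun i _ => continuous_const.mul (lagr_cont x i)
  have hFval : ∀ j i, F j (x i) = θ i j := by
    intro j i
    simp only [hF]
    rw [Finset.sum_eq_single i]
    · rw [lagr_self x hx, mul_one]
    · intro b _ hbi
      rw [lagr_ne x b i hbi.symm, mul_zero]
    · intro hi; exact absurd (Finset.mem_univ i) hi
  set E : Fin n → Circle → ℝ := fun j z =>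
    if j = z0 then - ∑ k ∈ Finset.univ.erase z0, F k z else F j z with hE
  have hEcont : ∀ j, Continuous (E j) := by
    intro j; by_cases hj : j = z0
    · have he : E j = fun z => - ∑ k ∈ Finset.univ.erase z0, F k z := by
        funext z; simp only [hE, if_pos hj]
      rw [he]
      exact (continuous_finset_sum _ fun k _ => hFcont k).neg
    · have he : E j = F j := by funext z; simp only [hE, if_neg hj]
      rw [he]; exact hFcont j
  set lam : Fin n → Circle → ℂ := fun j z =>
    (if j = z0 then g z else 1) * Complex.exp ((E j z : ℂ) * Complex.I) with hlam
  have hlamcont : ∀ j, Continuous (lam j) := by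
    intro j
    apply Continuous.mul
    · by_cases hj : j = z0
      · simpa [hj] using g.continuous
      · simp only [hj, if_false]; exact continuous_const
    · exact ((Complex.continuous_ofReal.comp (hEcont j)).mul continuous_const).cexp
  have hlamabs : ∀ j z, ‖lam j z‖ = 1 := by
    intro j z
    simp only [hlam, norm_mul, Complex.norm_exp_ofReal_mul_I]
    by_cases hj : j = z0 <;> simp [hj, hg z]
  have hsumE : ∀ z, ∑ j, E j z = 0 := by
    intro z
    rw [← Finset.add_sum_erase _ _ (Finset.mem_univ z0)]
    have hcg : ∀ k ∈ Finset.univ.erase z0, E k z = F k z := by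
      intro k hk
      simp only [hE, if_neg (Finset.ne_of_mem_erase hk)]
    rw [Finset.sum_congr rfl hcg]
    simp [hE]
  have hproddet : ∀ z, ∏ j, lam j z = g z := by
    intro z
    simp only [hlam]
    rw [Finset.prod_mul_distrib, ← Complex.exp_sum]
    have hcast : ∑ j : Fin n, (E j z : ℂ) * Complex.I
        = ((∑ j, E j z : ℝ) : ℂ) * Complex.I := by
      rw [Complex.ofReal_sum, Finset.sum_mul]
    rw [hcast, hsumE z]
    simp [Finset.prod_ite_eq' Finset.univ z0 (fun _ => g z)]
  have hprodv : ∀ i, ∏ k, v i k = g (x i) := by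
    intro i
    simp only [hv]
    rw [Finset.prod_ite, Finset.prod_const, Finset.prod_const_one, mul_one,
      card_mod n (d i) (hd i) (hdvd i)]
    exact hcompat i
  have hlamval : ∀ i j, lam j (x i) = v i j := by
    intro i j
    by_cases hj : j = z0
    · rw [hj]
      have hP : ∏ k ∈ Finset.univ.erase z0, v i k ≠ 0 :=
        Finset.prod_ne_zero_iff.mpr fun k _ => hvne i k
      have hEv : E z0 (x i) = - ∑ k ∈ Finset.univ.erase z0, θ i k := by
        simp only [hE, if_pos rfl]
        congr 1
        exact Finset.sum_congr rfl fun k _ => hFval k i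
      have hexp : Complex.exp ((E z0 (x i) : ℂ) * Complex.I)
          = (∏ k ∈ Finset.univ.erase z0, v i k)⁻¹ := by
        rw [hEv, Complex.ofReal_neg, neg_mul, Complex.exp_neg]
        congr 1
        rw [Complex.ofReal_sum, Finset.sum_mul, Complex.exp_sum]
        exact Finset.prod_congr rfl fun k _ => hexpθ i k
      simp only [hlam, if_pos rfl, if_true]
      rw [hexp, ← hprodv i,
        ← Finset.mul_prod_erase Finset.univ (v i) (Finset.mem_univ z0),
        mul_assoc, mul_inv_cancel₀ hP, mul_one]
    · simp only [hlam, hE, if_neg hj, one_mul]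
      rw [hFval j i]
      exact hexpθ i j
  refine ⟨⟨fun z => Matrix.diagonal (fun p => lam p z), ?_⟩, ?_, ?_, ?_⟩
  · apply continuous_matrix
    intro p q
    by_cases hpq : p = q
    · subst hpq
      simpa only [Matrix.diagonal_apply_eq] using hlamcont p
    · simp only [Matrix.diagonal_apply_ne _ hpq]
      exact continuous_const
  · intro i
    simp only [ContinuousMap.coe_mk]
    constructor
    · intro p q hpq
      exact Matrix.diagonal_apply_ne _ (fun e => hpq (by rw [e]))
    · intro p q p' q' h1 h2 h3 h4
      by_cases hpq : p = q
      · subst hpq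
        have hpq' : p' = q' := by
          apply Fin.ext
          have e1 := Nat.div_add_mod (p' : ℕ) (d i)
          have e2 := Nat.div_add_mod (q' : ℕ) (d i)
          rw [h2] at e1
          omega
        subst hpq'
        rw [Matrix.diagonal_apply_eq, Matrix.diagonal_apply_eq, hlamval i p, hlamval i p']
        simp only [hv]
        rw [h3]
      · have hpq' : p' ≠ q' := by
          intro e
          apply hpq
          apply Fin.ext
          have e' : (p' : ℕ) = (q' : ℕ) := by rw [e]
          rw [e'] at h3
          have e1 := Nat.div_add_mod (p : ℕ) (d i)
          have e2 := Nat.div_add_mod (q : ℕ) (d i)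
          rw [h1] at e1
          omega
        rw [Matrix.diagonal_apply_ne _ hpq, Matrix.diagonal_apply_ne _ hpq']
  · intro z
    simp only [ContinuousMap.coe_mk]
    have hone : ∀ p, lam p z * (starRingEnd ℂ) (lam p z) = 1 := by
      intro p
      rw [Complex.mul_conj, Complex.normSq_eq_norm_sq, hlamabs p z]
      norm_num
    have hone' : ∀ p, (starRingEnd ℂ) (lam p z) * lam p z = 1 := by
      intro p; rw [mul_comm]; exact hone p
    constructor
    · rw [Matrix.star_eq_conjTranspose, Matrix.diagonal_conjTranspose,
        Matrix.diagonal_mul_diagonal, ← Matrix.diagonal_one]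
      refine congrArg Matrix.diagonal (funext fun p => ?_)
      exact hone p
    · rw [Matrix.star_eq_conjTranspose, Matrix.diagonal_conjTranspose,
        Matrix.diagonal_mul_diagonal, ← Matrix.diagonal_one]
      refine congrArg Matrix.diagonal (funext fun p => ?_)
      exact hone' p
  constructor
  · intro z
    simp only [ContinuousMap.coe_mk, Matrix.det_diagonal]
    exact hproddet z
  · intro i
    simp only [ContinuousMap.coe_mk]
    have hinj : Function.Injective (Fin.castLE (Nat.le_of_dvd hn (hdvd i))) :=
      Fin.castLE_injective _
    have hsub : (Matrix.diagonal (fun p => lam p (x i))).submatrix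
        (Fin.castLE (Nat.le_of_dvd hn (hdvd i))) (Fin.castLE (Nat.le_of_dvd hn (hdvd i)))
        = Matrix.diagonal (fun p : Fin (d i) =>
            lam (Fin.castLE (Nat.le_of_dvd hn (hdvd i)) p) (x i)) := by
      ext p q
      by_cases hpq : p = q
      · subst hpq; simp [Matrix.submatrix_apply]
      · rw [Matrix.submatrix_apply, Matrix.diagonal_apply_ne _ (fun e => hpq (hinj e)),
          Matrix.diagonal_apply_ne _ hpq]
    rw [hsub, Matrix.det_diagonal]
    calc ∏ p : Fin (d i), lam (Fin.castLE (Nat.le_of_dvd hn (hdvd i)) p) (x i)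
        = ∏ p : Fin (d i), (if p = (⟨0, hd i⟩ : Fin (d i)) then h i else 1) := by
          refine Finset.prod_congr rfl fun p _ => ?_
          rw [hlamval i _]
          simp only [hv, Fin.coe_castLE]
          simp only [Nat.mod_eq_of_lt p.isLt]
          by_cases hp : p = (⟨0, hd i⟩ : Fin (d i))
          · subst hp; simp
          · rw [if_neg (fun e => hp (Fin.ext e)), if_neg hp]
      _ = h i := by
          rw [Finset.prod_ite_eq' Finset.univ (⟨0, hd i⟩ : Fin (d i)) (fun _ => h i)]
          simp
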